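/- Eigenvector convergence: assume Conditions (ii) and (iii). Suppose for each n there is a Ritz vector ṽ_n ∈ S_n with ‖ι ṽ_n‖_H = 1 and ã_n(ṽ_n, ṽ_n) = λ̃_n, and suppose there is v ∈ V with ‖ι v‖_H = 1 and a(v,v) = λ₁ such that every w ∈ V with ‖ι w‖_H = 1 and a(w,w) = λ₁ satisfies w = v or w = −v (the eigenspace corresponding to λ₁ is one-dimensional). Then |⟨ι ṽ_n, ι v⟩_H| → 1 as n → ∞. -/

import Mathlib

open Filter Topology
open scoped RealInnerProductSpace



/-- Weak sequential compactness of bounded sequences in a real Hilbert space. -/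
lemma aux_weak_compact
    {V : Type*} [NormedAddCommGroup V] [InnerProductSpace ℝ V] [CompleteSpace V]
    (x : ℕ → V) (R : ℝ) (hR : ∀ n, ‖x n‖ ≤ R) :
    ∃ (u : V) (φ : ℕ → ℕ), StrictMono φ ∧
      (∀ f : V →L[ℝ] ℝ, Tendsto (fun k => f (x (φ k))) atTop (𝓝 (f u))) ∧
      (∀ y : V, (∀ n, ⟪x n, y⟫ = 0) → ⟪u, y⟫ = 0) := by
  have hR0 : 0 ≤ R := le_trans (norm_nonneg _) (hR 0)
  set s : Set (ℕ → ℝ) := Set.univ.pi fun _ => Set.Icc (-(R*R)) (R*R) with hs_def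
  have hs : IsCompact s := isCompact_univ_pi fun _ => isCompact_Icc
  have hinner_bdd : ∀ n y, |⟪x n, y⟫| ≤ R * ‖y‖ := fun n y =>
    (abs_real_inner_le_norm _ _).trans (mul_le_mul_of_nonneg_right (hR n) (norm_nonneg _))
  have hmem : ∀ n, (fun j => ⟪x n, x j⟫) ∈ s := by
    intro n
    rw [hs_def, Set.mem_univ_pi]
    intro j
    have h2 : |⟪x n, x j⟫| ≤ R * R :=
      (hinner_bdd n (x j)).trans (mul_le_mul_of_nonneg_left (hR j) hR0)
    exact Set.mem_Icc.mpr (abs_le.mp h2)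
  obtain ⟨g, -, φ, hφ, hg⟩ := hs.tendsto_subseq hmem
  have hcoord : ∀ j, Tendsto (fun k => ⟪x (φ k), x j⟫) atTop (𝓝 (g j)) := by
    intro j
    exact (tendsto_pi_nhds.mp hg) j
  -- the set of y against which the subsequence converges weakly
  let E : Submodule ℝ V :=
  { carrier := {y | ∃ c : ℝ, Tendsto (fun k => ⟪x (φ k), y⟫) atTop (𝓝 c)}
    add_mem' := by
      rintro y z ⟨c, hc⟩ ⟨d, hd⟩
      exact ⟨c + d, by simpa [inner_add_right] using hc.add hd⟩
    zero_mem' := ⟨0, by simpa [inner_zero_right] using (tendsto_const_nhds : Tendsto (fun _ : ℕ => (0:ℝ)) atTop _)⟩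
    smul_mem' := by
      rintro r y ⟨c, hc⟩
      exact ⟨r * c, by simpa [real_inner_smul_right] using hc.const_mul r⟩ }
  have hEmem : ∀ y : V, y ∈ E ↔ ∃ c : ℝ, Tendsto (fun k => ⟪x (φ k), y⟫) atTop (𝓝 c) := fun y => Iff.rfl
  have hEclosed : IsClosed (E : Set V) := by
    refine isClosed_of_closure_subset ?_
    intro y hy
    have hcau : CauchySeq (fun k => ⟪x (φ k), y⟫) := by
      rw [Metric.cauchySeq_iff]
      intro ε hε
      obtain ⟨z, hzE, hz⟩ := Metric.mem_closure_iff.mp hy (ε / (3 * (R + 1)) / 2)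
        (by positivity)
      obtain ⟨c, hc⟩ := (hEmem z).mp hzE
      have hcz : CauchySeq (fun k => ⟪x (φ k), z⟫) := hc.cauchySeq
      rw [Metric.cauchySeq_iff] at hcz
      obtain ⟨N, hN⟩ := hcz (ε/3) (by positivity)
      refine ⟨N, fun m hm n hn => ?_⟩
      have hyznorm : ‖y - z‖ < ε / (3 * (R + 1)) := by
        rw [dist_eq_norm] at hz
        have h4 : ε / (3 * (R + 1)) / 2 < ε / (3 * (R + 1)) :=
          half_lt_self (by positivity)
        linarith
      have key : ∀ k, |⟪x (φ k), y⟫ - ⟪x (φ k), z⟫| ≤ R * ‖y - z‖ := by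
        intro k
        rw [← inner_sub_right]
        exact hinner_bdd _ _
      have hsmall : R * ‖y - z‖ ≤ ε / 3 := by
        have h1 : R * ‖y - z‖ ≤ R * (ε / (3 * (R + 1))) :=
          mul_le_mul_of_nonneg_left hyznorm.le hR0
        have h2 : R * (ε / (3 * (R + 1))) ≤ ε / 3 := by
          rw [mul_div_assoc', div_le_div_iff₀ (by positivity) (by norm_num : (0:ℝ) < 3)]
          nlinarith [hε.le, hR0]
        linarith
      have hd := hN m hm n hn
      rw [Real.dist_eq] at hd ⊢
      calc |⟪x (φ m), y⟫ - ⟪x (φ n), y⟫|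
          ≤ |⟪x (φ m), y⟫ - ⟪x (φ m), z⟫| + |⟪x (φ m), z⟫ - ⟪x (φ n), z⟫|
            + |⟪x (φ n), z⟫ - ⟪x (φ n), y⟫| := by
              have := abs_sub_le (⟪x (φ m), y⟫) (⟪x (φ m), z⟫) (⟪x (φ n), y⟫)
              have h3 := abs_sub_le (⟪x (φ m), z⟫) (⟪x (φ n), z⟫) (⟪x (φ n), y⟫)
              linarith
        _ < ε := by
              have k1 := key m
              have k2 : |⟪x (φ n), z⟫ - ⟪x (φ n), y⟫| ≤ R * ‖y - z‖ := by
                rw [abs_sub_comm]; exact key n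
              linarith
    obtain ⟨c, hc⟩ := cauchySeq_tendsto_of_complete hcau
    exact (hEmem y).mpr ⟨c, hc⟩
  -- the closure of the span of the sequence
  set K : Submodule ℝ V := (Submodule.span ℝ (Set.range x)).topologicalClosure with hK_def
  have hxK : ∀ n, x n ∈ K :=
    fun n => Submodule.le_topologicalClosure _ (Submodule.subset_span ⟨n, rfl⟩)
  have hKE : K ≤ E := by
    refine Submodule.topologicalClosure_minimal _ ?_ hEclosed
    rw [Submodule.span_le]
    rintro _ ⟨j, rfl⟩
    exact (hEmem (x j)).mpr ⟨g j, hcoord j⟩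
  haveI : CompleteSpace K :=
    (Submodule.isClosed_topologicalClosure _).completeSpace_coe
  have hEall : ∀ y : V, y ∈ E := by
    intro y
    obtain ⟨a, ha, b, hb, rfl⟩ := K.exists_add_mem_mem_orthogonal y
    have hbE : b ∈ E := by
      refine (hEmem b).mpr ⟨0, ?_⟩
      have hz : ∀ k, ⟪x (φ k), b⟫ = (0:ℝ) := fun k =>
        (Submodule.mem_orthogonal K b).mp hb _ (hxK (φ k))
      simpa [hz] using (tendsto_const_nhds : Tendsto (fun _ : ℕ => (0:ℝ)) atTop _)
    exact E.add_mem (hKE ha) hbE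
  choose c hc using fun y => (hEmem y).mp (hEall y)
  have hadd : ∀ y z : V, c (y + z) = c y + c z := by
    intro y z
    exact tendsto_nhds_unique (hc (y + z))
      (by simpa [inner_add_right] using (hc y).add (hc z))
  have hsmul : ∀ (r : ℝ) (y : V), c (r • y) = r * c y := by
    intro r y
    exact tendsto_nhds_unique (hc (r • y))
      (by simpa [real_inner_smul_right] using (hc y).const_mul r)
  have hbound : ∀ y, |c y| ≤ R * ‖y‖ := by
    intro y
    exact le_of_tendsto (hc y).abs (Filter.Eventually.of_forall fun k => hinner_bdd _ _)
  let L : V →L[ℝ] ℝ := LinearMap.mkContinuous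
    { toFun := c, map_add' := hadd, map_smul' := hsmul } R
    (fun y => by simpa using hbound y)
  set u : V := (InnerProductSpace.toDual ℝ V).symm L with hu_def
  have hu : ∀ y, ⟪u, y⟫ = c y := by
    intro y
    rw [hu_def]
    exact InnerProductSpace.toDual_symm_apply
  refine ⟨u, φ, hφ, ?_, ?_⟩
  · intro f
    set yf := (InnerProductSpace.toDual ℝ V).symm f with hyf
    have hf : ∀ w, f w = ⟪yf, w⟫ := fun w => (InnerProductSpace.toDual_symm_apply).symm
    have h1 : Tendsto (fun k => ⟪x (φ k), yf⟫) atTop (𝓝 (c yf)) := hc yf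
    have h2 : f u = c yf := by
      rw [hf u, real_inner_comm, hu yf]
    rw [h2]
    simpa [hf, real_inner_comm] using h1
  · intro y hy
    rw [hu y]
    exact tendsto_nhds_unique (hc y) (by simpa [hy] using (tendsto_const_nhds : Tendsto (fun _ : ℕ => (0:ℝ)) atTop _))

/-- A weakly convergent bounded sequence is mapped to a strongly convergent sequence
by a compact operator. -/
lemma aux_weak_to_strong
    {V H : Type*}
    [NormedAddCommGroup V] [InnerProductSpace ℝ V] [CompleteSpace V]
    [NormedAddCommGroup H] [InnerProductSpace ℝ H] [CompleteSpace H]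
    (ι : V →L[ℝ] H) (hι_cpt : IsCompactOperator ι)
    (x : ℕ → V) (R : ℝ) (hR : ∀ n, ‖x n‖ ≤ R) (u : V)
    (hw : ∀ f : V →L[ℝ] ℝ, Tendsto (fun k => f (x k)) atTop (𝓝 (f u))) :
    Tendsto (fun k => ι (x k)) atTop (𝓝 (ι u)) := by
  have hwH : ∀ g : H, Tendsto (fun k => ⟪ι (x k), g⟫) atTop (𝓝 ⟪ι u, g⟫) := by
    intro g
    have h1 := hw ((innerSL ℝ g).comp ι)
    simp only [ContinuousLinearMap.comp_apply, innerSL_apply_apply] at h1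
    have h2 : ∀ w : V, ⟪g, ι w⟫ = ⟪ι w, g⟫ := fun w => real_inner_comm _ _
    simpa [h2] using h1
  refine tendsto_of_subseq_tendsto fun ns hns => ?_
  have hcpt2 : IsCompact (closure (ι '' Metric.closedBall 0 R)) :=
    hι_cpt.isCompact_closure_image_closedBall (𝕜₁ := ℝ) R
  have hmem : ∀ k, ι (x (ns k)) ∈ closure (ι '' Metric.closedBall 0 R) := by
    intro k
    exact subset_closure ⟨x (ns k), by simpa using hR (ns k), rfl⟩
  obtain ⟨h0, -, ψ, hψ, hh⟩ := hcpt2.tendsto_subseq hmem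
  have heq : h0 = ι u := by
    have hzero : ∀ g : H, ⟪h0 - ι u, g⟫ = 0 := by
      intro g
      have t1 : Tendsto (fun k => ⟪ι (x (ns (ψ k))), g⟫) atTop (𝓝 ⟪h0, g⟫) :=
        (hh.inner tendsto_const_nhds)
      have t2 : Tendsto (fun k => ⟪ι (x (ns (ψ k))), g⟫) atTop (𝓝 ⟪ι u, g⟫) :=
        (hwH g).comp (hns.comp hψ.tendsto_atTop)
      have := tendsto_nhds_unique t1 t2
      rw [inner_sub_left, this, sub_self]
    have := hzero (h0 - ι u)
    rwa [inner_self_eq_zero, sub_eq_zero] at this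
  exact ⟨ψ, heq ▸ hh⟩

lemma aux_quad_cont
    {V : Type*} [NormedAddCommGroup V] [InnerProductSpace ℝ V]
    (B : V →L[ℝ] V →L[ℝ] ℝ) {w : ℕ → V} {l : V}
    (h : Tendsto w atTop (𝓝 l)) :
    Tendsto (fun n => B (w n) (w n)) atTop (𝓝 (B l l)) := by
  have hcont : Continuous fun p : V × V => B p.1 p.2 :=
    B.isBoundedBilinearMap.continuous
  have := (hcont.tendsto (l, l)).comp (h.prodMk_nhds h)
  exact this

set_option maxHeartbeats 1600000 in
/-- **Eigenvector convergence (Theorem 4.4 of the paper).**  Under Conditions (ii)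
and (iii), if `ṽₙ ∈ Sₙ` are Ritz vectors with `‖ι ṽₙ‖ = 1` and
`ãₙ(ṽₙ,ṽₙ) = λ̃ₙ`, and the eigenspace of `λ₁` is one-dimensional, spanned by a
minimiser `v` with `‖ι v‖ = 1` and `a(v,v) = λ₁`, then `|⟨ι ṽₙ, ι v⟩| → 1`. -/
theorem to_ritz_eigenvector_convergence
    {V H : Type*}
    [NormedAddCommGroup V] [InnerProductSpace ℝ V] [CompleteSpace V]
    [NormedAddCommGroup H] [InnerProductSpace ℝ H] [CompleteSpace H]
    (ι : V →L[ℝ] H) (hι_inj : Function.Injective ι)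
    (hι_cpt : IsCompactOperator ι)
    (a0 a1 : V →ₗ[ℝ] V →ₗ[ℝ] ℝ)
    (ha0_symm : ∀ u v : V, a0 u v = a0 v u)
    (ha1_symm : ∀ u v : V, a1 u v = a1 v u)
    (M : ℝ)
    (ha0_bdd : ∀ u v : V, |a0 u v| ≤ M * ‖u‖ * ‖v‖)
    (ha1_bdd : ∀ u v : V, |a1 u v| ≤ M * ‖u‖ * ‖v‖)
    (α : ℝ) (hα : 0 < α)
    (ha0_coer : ∀ v : V, α * ‖v‖ ^ 2 ≤ a0 v v)
    (ha1_coer : ∀ v : V, α * ‖v‖ ^ 2 ≤ a1 v v)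
    (T : V →ₗ[ℝ] V) (CV CT : ℝ)
    (hT_bdd : ∀ v : V, ‖T v‖ ≤ CV * ‖v‖)
    (hT_H : ∀ v : V, ‖ι (T v)‖ ≤ CT * ‖ι v‖)
    (S : ℕ → Submodule ℝ V) (hS_mono : Monotone S)
    (hS_ne : ∀ n, S n ≠ ⊥) (hS_fd : ∀ n, FiniteDimensional ℝ (S n))
    (lam1 : ℝ)
    (hlam1 : lam1 = sInf {x : ℝ | ∃ v : V, v ≠ 0 ∧
      x = ((a0 v v + a1 (T v) (T v)) / 2) / ‖ι v‖ ^ 2})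
    (hdensity : sInf {x : ℝ | ∃ v : V, (∃ n, v ∈ S n) ∧ v ≠ 0 ∧
      x = ((a0 v v + a1 (T v) (T v)) / 2) / ‖ι v‖ ^ 2} = lam1)
    (I : ℕ → V →ₗ[ℝ] V)
    (lamT : ℕ → ℝ)
    (hlamT : ∀ n, lamT n = sInf {x : ℝ | ∃ v : V, v ∈ S n ∧ v ≠ 0 ∧
      x = ((a0 v v + a1 (I n (T v)) (I n (T v))) / 2) / ‖ι v‖ ^ 2})
    -- Condition (ii): H¹-convergence of the interpolated transfer operator
    (hii : ∀ f : V, (∃ m, f ∈ S m) →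
      Tendsto (fun n => ‖I n (T f) - T f‖) atTop (𝓝 0))
    -- Condition (iii): L²-stability
    (C : ℝ) (hC : 0 < C)
    (hiii : ∀ m : ℕ, ∀ n ≥ m, ∀ v ∈ S m, ‖ι (I n (T v))‖ ≤ C * ‖ι v‖)
    -- Ritz vectors
    (vt : ℕ → V) (hvt_mem : ∀ n, vt n ∈ S n) (hvt_norm : ∀ n, ‖ι (vt n)‖ = 1)
    (hvt_min : ∀ n, (a0 (vt n) (vt n)
      + a1 (I n (T (vt n))) (I n (T (vt n)))) / 2 = lamT n)
    -- a normalised eigenvector for λ₁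
    (v : V) (hv_norm : ‖ι v‖ = 1)
    (hv_eig : (a0 v v + a1 (T v) (T v)) / 2 = lam1)
    -- the eigenspace corresponding to λ₁ is one-dimensional
    (hv_unique : ∀ w : V, ‖ι w‖ = 1 →
      (a0 w w + a1 (T w) (T w)) / 2 = lam1 → w = v ∨ w = -v)
    :
    Tendsto (fun n => |⟪ι (vt n), ι v⟫|) atTop (𝓝 1) := by
  -- continuous versions of the bilinear forms
  obtain ⟨B0, hB0⟩ : ∃ B : V →L[ℝ] V →L[ℝ] ℝ, ∀ u' v' : V, B u' v' = a0 u' v' :=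
    ⟨LinearMap.mkContinuous₂ a0 M
      (fun u' v' => by rw [Real.norm_eq_abs]; exact ha0_bdd u' v'), fun _ _ => rfl⟩
  obtain ⟨B1, hB1⟩ : ∃ B : V →L[ℝ] V →L[ℝ] ℝ, ∀ u' v' : V, B u' v' = a1 u' v' :=
    ⟨LinearMap.mkContinuous₂ a1 M
      (fun u' v' => by rw [Real.norm_eq_abs]; exact ha1_bdd u' v'), fun _ _ => rfl⟩
  -- basic positivity facts
  have hq0_nonneg : ∀ w : V, (0:ℝ) ≤ a0 w w :=
    fun w => le_trans (mul_nonneg hα.le (by positivity)) (ha0_coer w)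
  have hq1_nonneg : ∀ w : V, (0:ℝ) ≤ a1 w w :=
    fun w => le_trans (mul_nonneg hα.le (by positivity)) (ha1_coer w)
  obtain ⟨v0, hv0S, hv0ne⟩ := (Submodule.ne_bot_iff (S 0)).mp (hS_ne 0)
  have hι_ne : ∀ w : V, w ≠ 0 → ι w ≠ 0 := by
    intro w hw hcon
    exact hw (hι_inj (by simpa using hcon))
  have hCT0 : 0 ≤ CT := by
    have h1 : 0 < ‖ι v0‖ := norm_pos_iff.mpr (hι_ne v0 hv0ne)
    nlinarith [hT_H v0, norm_nonneg (ι (T v0))]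
  have hlam1_nonneg : 0 ≤ lam1 := by
    rw [← hv_eig]
    exact div_nonneg (add_nonneg (hq0_nonneg v) (hq1_nonneg (T v))) (by norm_num)
  have hlam1_le : ∀ w : V, w ≠ 0 →
      lam1 ≤ ((a0 w w + a1 (T w) (T w)) / 2) / ‖ι w‖ ^ 2 := by
    intro w hw
    rw [hlam1]
    refine csInf_le ⟨0, ?_⟩ ⟨w, hw, rfl⟩
    rintro y ⟨w', hw', rfl⟩
    exact div_nonneg (div_nonneg (add_nonneg (hq0_nonneg w') (hq1_nonneg (T w')))
      (by norm_num)) (by positivity)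
  have hlamT_nonneg : ∀ n, 0 ≤ lamT n := by
    intro n
    rw [hlamT n]
    apply Real.sInf_nonneg
    rintro y ⟨w', _, _, rfl⟩
    exact div_nonneg (div_nonneg (add_nonneg (hq0_nonneg w') (hq1_nonneg _))
      (by norm_num)) (by positivity)
  have hlamT_le : ∀ n, ∀ w ∈ S n, w ≠ 0 →
      lamT n ≤ ((a0 w w + a1 (I n (T w)) (I n (T w))) / 2) / ‖ι w‖ ^ 2 := by
    intro n w hwS hw
    rw [hlamT n]
    refine csInf_le ⟨0, ?_⟩ ⟨w, hwS, hw, rfl⟩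
    rintro y ⟨w', _, _, rfl⟩
    exact div_nonneg (div_nonneg (add_nonneg (hq0_nonneg w') (hq1_nonneg _))
      (by norm_num)) (by positivity)
  -- convergence of the discrete Rayleigh quotient at a fixed f
  have hRq_conv : ∀ f : V, (∃ m, f ∈ S m) →
      Tendsto (fun n => ((a0 f f + a1 (I n (T f)) (I n (T f))) / 2) / ‖ι f‖ ^ 2)
        atTop (𝓝 (((a0 f f + a1 (T f) (T f)) / 2) / ‖ι f‖ ^ 2)) := by
    intro f hf
    have h1 : Tendsto (fun n => I n (T f)) atTop (𝓝 (T f)) :=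
      tendsto_iff_norm_sub_tendsto_zero.mpr (hii f hf)
    have h2 : Tendsto (fun n => a1 (I n (T f)) (I n (T f))) atTop
        (𝓝 (a1 (T f) (T f))) := by
      have := aux_quad_cont B1 h1
      simpa only [hB1] using this
    exact ((tendsto_const_nhds.add h2).div_const 2).div_const _
  -- eventual upper bound for the Ritz values
  have hU : ∀ ε : ℝ, 0 < ε → ∃ N, ∀ n ≥ N, lamT n < lam1 + ε := by
    intro ε hε
    have hne : {x : ℝ | ∃ w : V, (∃ n, w ∈ S n) ∧ w ≠ 0 ∧
        x = ((a0 w w + a1 (T w) (T w)) / 2) / ‖ι w‖ ^ 2}.Nonempty :=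
      ⟨_, ⟨v0, ⟨0, hv0S⟩, hv0ne, rfl⟩⟩
    have hlt : sInf {x : ℝ | ∃ w : V, (∃ n, w ∈ S n) ∧ w ≠ 0 ∧
        x = ((a0 w w + a1 (T w) (T w)) / 2) / ‖ι w‖ ^ 2} < lam1 + ε / 2 := by
      rw [hdensity]; linarith
    obtain ⟨y, ⟨f, ⟨mf, hfm⟩, hf0, rfl⟩, hylt⟩ := exists_lt_of_csInf_lt hne hlt
    have hconv := hRq_conv f ⟨mf, hfm⟩
    have hev : ∀ᶠ n in atTop,
        ((a0 f f + a1 (I n (T f)) (I n (T f))) / 2) / ‖ι f‖ ^ 2 < lam1 + ε :=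
      hconv.eventually_lt_const (by linarith)
    rw [eventually_atTop] at hev
    obtain ⟨N0, hN0⟩ := hev
    refine ⟨max N0 mf, fun n hn => ?_⟩
    have h5 := hlamT_le n f (hS_mono (le_trans (le_max_right N0 mf) hn) hfm) hf0
    exact lt_of_le_of_lt h5 (hN0 n (le_trans (le_max_left N0 mf) hn))
  obtain ⟨N₁, hN₁⟩ := hU 1 one_pos
  set R : ℝ := Real.sqrt (2 * (lam1 + 1) / α) with hR_def
  have hR_ok : 0 ≤ 2 * (lam1 + 1) / α := div_nonneg (by linarith) hα.le
  have hbound_of : ∀ {y : V}, α * ‖y‖ ^ 2 ≤ 2 * (lam1 + 1) → ‖y‖ ≤ R := by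
    intro y hy
    rw [hR_def, Real.le_sqrt (norm_nonneg _) hR_ok]
    rw [le_div_iff₀ hα]
    linarith [hy]
  -- the subsequence argument
  refine tendsto_of_subseq_tendsto fun ns hns => ?_
  obtain ⟨K', hK'⟩ := eventually_atTop.mp (hns.eventually (eventually_ge_atTop N₁))
  set m : ℕ → ℕ := fun k => ns (k + K') with hm_def
  have hm_ge : ∀ k, N₁ ≤ m k := fun k => hK' _ (Nat.le_add_left K' k)
  have hm_tendsto : Tendsto m atTop atTop := hns.comp (tendsto_add_atTop_nat K')
  set x : ℕ → V := fun k => vt (m k) with hx_def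
  set w : ℕ → V := fun k => I (m k) (T (vt (m k))) with hw_def
  have hsum_eq : ∀ k, a0 (x k) (x k) + a1 (w k) (w k) = 2 * lamT (m k) := by
    intro k
    have := hvt_min (m k)
    simp only [hx_def, hw_def]
    linarith
  have hlamT_bd : ∀ k, lamT (m k) ≤ lam1 + 1 := fun k => (hN₁ _ (hm_ge k)).le
  have hxR : ∀ k, ‖x k‖ ≤ R := by
    intro k
    refine hbound_of ?_
    have h1 := ha0_coer (x k)
    have h2 := hq1_nonneg (w k)
    have h3 := hsum_eq k
    have h4 := hlamT_bd k
    linarith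
  have hwR : ∀ k, ‖w k‖ ≤ R := by
    intro k
    refine hbound_of ?_
    have h1 := ha1_coer (w k)
    have h2 := hq0_nonneg (x k)
    have h3 := hsum_eq k
    have h4 := hlamT_bd k
    linarith
  obtain ⟨u, φ₁, hφ₁, hu_weak, hu_orth⟩ := aux_weak_compact x R hxR
  obtain ⟨z, φ₂, hφ₂, hz_weak, -⟩ := aux_weak_compact (w ∘ φ₁) R (fun k => hwR _)
  have hIcc : ∀ k, lamT (m (φ₁ (φ₂ k))) ∈ Set.Icc (0:ℝ) (lam1 + 1) :=
    fun k => ⟨hlamT_nonneg _, hlamT_bd _⟩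
  obtain ⟨L, -, φ₃, hφ₃, hLtend⟩ := isCompact_Icc.tendsto_subseq hIcc
  set ψ : ℕ → ℕ := fun k => φ₁ (φ₂ (φ₃ k)) with hψ_def
  have hψ_tendsto : Tendsto ψ atTop atTop :=
    (hφ₁.comp (hφ₂.comp hφ₃)).tendsto_atTop
  have hmψ : Tendsto (fun k => m (ψ k)) atTop atTop := hm_tendsto.comp hψ_tendsto
  have hu_weak' : ∀ f : V →L[ℝ] ℝ,
      Tendsto (fun k => f (x (ψ k))) atTop (𝓝 (f u)) := by
    intro f
    exact (hu_weak f).comp (hφ₂.tendsto_atTop.comp hφ₃.tendsto_atTop)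
  have hz_weak' : ∀ f : V →L[ℝ] ℝ,
      Tendsto (fun k => f (w (ψ k))) atTop (𝓝 (f z)) := by
    intro f
    exact (hz_weak f).comp hφ₃.tendsto_atTop
  have hxH : Tendsto (fun k => ι (x (ψ k))) atTop (𝓝 (ι u)) :=
    aux_weak_to_strong ι hι_cpt (fun k => x (ψ k)) R (fun k => hxR _) u hu_weak'
  have hwH : Tendsto (fun k => ι (w (ψ k))) atTop (𝓝 (ι z)) :=
    aux_weak_to_strong ι hι_cpt (fun k => w (ψ k)) R (fun k => hwR _) z hz_weak'
  have hιu_norm : ‖ι u‖ = 1 := by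
    have h1 : (fun k => ‖ι (x (ψ k))‖) = fun _ => (1:ℝ) :=
      funext fun k => hvt_norm (m (ψ k))
    have h2 := hxH.norm
    rw [h1] at h2
    exact tendsto_nhds_unique h2 tendsto_const_nhds
  have hu_ne : u ≠ 0 := by
    intro hcon
    rw [hcon] at hιu_norm
    simp at hιu_norm
  -- u lies in the closure of the union of the Sₙ
  set K2 : Submodule ℝ V := (⨆ n, S n).topologicalClosure with hK2_def
  haveI : CompleteSpace K2 :=
    (Submodule.isClosed_topologicalClosure _).completeSpace_coe
  have hxK2 : ∀ k, x k ∈ K2 := fun k =>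
    Submodule.le_topologicalClosure _ ((le_iSup S (m k)) (hvt_mem (m k)))
  have hu_in : u ∈ K2 := by
    obtain ⟨a, ha, b, hb, hab⟩ := K2.exists_add_mem_mem_orthogonal u
    have h1 : ⟪u, b⟫ = 0 :=
      hu_orth b (fun n => (Submodule.mem_orthogonal K2 b).mp hb _ (hxK2 n))
    have h2 : ⟪a, b⟫ = (0:ℝ) := (Submodule.mem_orthogonal K2 b).mp hb a ha
    have h3 : ⟪b, b⟫ = (0:ℝ) := by
      rw [hab, inner_add_left, h2, zero_add] at h1
      exact h1
    have hb0 : b = 0 := inner_self_eq_zero.mp h3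
    rw [hab, hb0, add_zero]
    exact ha
  have hu_cl : u ∈ closure ((⨆ n, S n : Submodule ℝ V) : Set V) := by
    rw [← Submodule.topologicalClosure_coe]
    exact hu_in
  -- strong H-convergence of the interpolants to ι (T u)
  have hwTu : Tendsto (fun k => ι (w (ψ k))) atTop (𝓝 (ι (T u))) := by
    rw [Metric.tendsto_atTop]
    intro ε hε
    have hden : (0:ℝ) < C * ‖ι‖ + CT * ‖ι‖ + 1 :=
      add_pos_of_nonneg_of_pos (add_nonneg (mul_nonneg hC.le (norm_nonneg _))
        (mul_nonneg hCT0 (norm_nonneg _))) one_pos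
    set δ : ℝ := ε / (4 * (C * ‖ι‖ + CT * ‖ι‖ + 1)) with hδ_def
    have hδ_pos : 0 < δ := by
      rw [hδ_def]; positivity
    obtain ⟨p, hpmem, hdistp⟩ := Metric.mem_closure_iff.mp hu_cl δ hδ_pos
    obtain ⟨m₀, hpm₀⟩ :=
      (Submodule.mem_iSup_of_directed S hS_mono.directed_le).mp hpmem
    have hup : ‖u - p‖ < δ := by rwa [dist_eq_norm] at hdistp
    have e1 : ∀ᶠ k in atTop, m₀ ≤ m (ψ k) := hmψ.eventually (eventually_ge_atTop m₀)
    have e2 : ∀ᶠ k in atTop, C * ‖ι (x (ψ k)) - ι u‖ < ε / 4 := by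
      have hd : Tendsto (fun k => ‖ι (x (ψ k)) - ι u‖) atTop (𝓝 0) :=
        tendsto_iff_norm_sub_tendsto_zero.mp hxH
      have hd2 := hd.const_mul C
      rw [mul_zero] at hd2
      exact hd2.eventually_lt_const (by positivity)
    have e3 : ∀ᶠ k in atTop, ‖ι‖ * ‖I (m (ψ k)) (T p) - T p‖ < ε / 4 := by
      have hd : Tendsto (fun k => ‖I (m (ψ k)) (T p) - T p‖) atTop (𝓝 0) :=
        (hii p ⟨m₀, hpm₀⟩).comp hmψ
      have hd2 := hd.const_mul ‖ι‖
      rw [mul_zero] at hd2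
      exact hd2.eventually_lt_const (by positivity)
    obtain ⟨N, hN⟩ := eventually_atTop.mp ((e1.and e2).and e3)
    refine ⟨N, fun k hk => ?_⟩
    obtain ⟨⟨hk1, hk2⟩, hk3⟩ := hN k hk
    set n := m (ψ k) with hn_def
    have hdecomp : w (ψ k) - T u =
        I n (T (x (ψ k) - p)) + (I n (T p) - T p) + T (p - u) := by
      simp only [hw_def, hx_def, map_sub]
      abel
    have hA : ‖ι (I n (T (x (ψ k) - p)))‖ ≤ C * ‖ι (x (ψ k) - p)‖ :=
      hiii n n le_rfl _ (Submodule.sub_mem _ (hvt_mem n) (hS_mono hk1 hpm₀))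
    have hA2 : ‖ι (x (ψ k) - p)‖ ≤ ‖ι (x (ψ k)) - ι u‖ + ‖ι (u - p)‖ := by
      have : ι (x (ψ k) - p) = (ι (x (ψ k)) - ι u) + ι (u - p) := by
        simp [map_sub]
      rw [this]
      exact norm_add_le _ _
    have hup' : ‖ι (u - p)‖ ≤ ‖ι‖ * δ := by
      calc ‖ι (u - p)‖ ≤ ‖ι‖ * ‖u - p‖ := ι.le_opNorm _
        _ ≤ ‖ι‖ * δ := mul_le_mul_of_nonneg_left hup.le (norm_nonneg _)
    have hB : ‖ι (I n (T p) - T p)‖ ≤ ‖ι‖ * ‖I n (T p) - T p‖ := ι.le_opNorm _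
    have hD : ‖ι (T (p - u))‖ ≤ CT * (‖ι‖ * δ) := by
      have h6 : ‖ι (p - u)‖ ≤ ‖ι‖ * δ := by
        rw [← norm_neg, ← map_neg, neg_sub]
        exact hup'
      calc ‖ι (T (p - u))‖ ≤ CT * ‖ι (p - u)‖ := hT_H _
        _ ≤ CT * (‖ι‖ * δ) := mul_le_mul_of_nonneg_left h6 hCT0
    have hδsum : C * (‖ι‖ * δ) + CT * (‖ι‖ * δ) ≤ ε / 4 := by
      have hδeq : (C * ‖ι‖ + CT * ‖ι‖ + 1) * δ = ε / 4 := by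
        rw [hδ_def]
        field_simp
      nlinarith [hδ_pos]
    have htri : ‖ι (w (ψ k)) - ι (T u)‖ ≤
        ‖ι (I n (T (x (ψ k) - p)))‖ + ‖ι (I n (T p) - T p)‖ + ‖ι (T (p - u))‖ := by
      have h7 : ι (w (ψ k)) - ι (T u) =
          ι (I n (T (x (ψ k) - p))) + ι (I n (T p) - T p) + ι (T (p - u)) := by
        rw [← map_sub, hdecomp]
        simp [map_add]
      rw [h7]
      exact norm_add₃_le
    rw [dist_eq_norm]
    calc ‖ι (w (ψ k)) - ι (T u)‖
        ≤ ‖ι (I n (T (x (ψ k) - p)))‖ + ‖ι (I n (T p) - T p)‖ + ‖ι (T (p - u))‖ := htri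
      _ ≤ (C * ‖ι (x (ψ k)) - ι u‖ + C * (‖ι‖ * δ)) + ‖ι‖ * ‖I n (T p) - T p‖
            + CT * (‖ι‖ * δ) := by
          have h8 : ‖ι (I n (T (x (ψ k) - p)))‖ ≤
              C * ‖ι (x (ψ k)) - ι u‖ + C * (‖ι‖ * δ) := by
            calc ‖ι (I n (T (x (ψ k) - p)))‖ ≤ C * ‖ι (x (ψ k) - p)‖ := hA
              _ ≤ C * (‖ι (x (ψ k)) - ι u‖ + ‖ι (u - p)‖) :=
                  mul_le_mul_of_nonneg_left hA2 hC.le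
              _ ≤ C * ‖ι (x (ψ k)) - ι u‖ + C * (‖ι‖ * δ) := by
                  have := mul_le_mul_of_nonneg_left hup' hC.le
                  linarith [this]
          linarith [h8, hB, hD]
      _ < ε := by linarith [hk2, hk3, hδsum]
  have hz_eq : z = T u := hι_inj (tendsto_nhds_unique hwH hwTu)
  -- lamT along the subsequence converges to L ≤ lam1
  have hLψ : Tendsto (fun k => lamT (m (ψ k))) atTop (𝓝 L) := hLtend
  have hL_le : L ≤ lam1 := by
    refine le_of_forall_pos_lt_add ?_
    intro ε hε
    obtain ⟨N, hN⟩ := hU (ε / 2) (by positivity)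
    have hev : ∀ᶠ k in atTop, lamT (m (ψ k)) ≤ lam1 + ε / 2 :=
      (hmψ.eventually (eventually_ge_atTop N)).mono fun k hk => (hN _ hk).le
    have := le_of_tendsto hLψ hev
    linarith
  -- lower semicontinuity of the quadratic forms
  have h6 : Tendsto (fun k => a0 u (x (ψ k))) atTop (𝓝 (a0 u u)) := by
    have := hu_weak' (B0 u)
    simpa only [hB0] using this
  have h7 : Tendsto (fun k => a1 z (w (ψ k))) atTop (𝓝 (a1 z z)) := by
    have := hz_weak' (B1 z)
    simpa only [hB1] using this
  have hlsc0 : ∀ k, 2 * a0 u (x (ψ k)) - a0 u u ≤ a0 (x (ψ k)) (x (ψ k)) := by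
    intro k
    have hexp : a0 (x (ψ k) - u) (x (ψ k) - u) =
        a0 (x (ψ k)) (x (ψ k)) - 2 * a0 u (x (ψ k)) + a0 u u := by
      simp only [map_sub, LinearMap.sub_apply]
      rw [ha0_symm (x (ψ k)) u]
      ring
    have := hq0_nonneg (x (ψ k) - u)
    linarith [hexp ▸ this]
  have hlsc1 : ∀ k, 2 * a1 z (w (ψ k)) - a1 z z ≤ a1 (w (ψ k)) (w (ψ k)) := by
    intro k
    have hexp : a1 (w (ψ k) - z) (w (ψ k) - z) =
        a1 (w (ψ k)) (w (ψ k)) - 2 * a1 z (w (ψ k)) + a1 z z := by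
      simp only [map_sub, LinearMap.sub_apply]
      rw [ha1_symm (w (ψ k)) z]
      ring
    have := hq1_nonneg (w (ψ k) - z)
    linarith [hexp ▸ this]
  have hsum_tend : Tendsto (fun k => a0 (x (ψ k)) (x (ψ k)) + a1 (w (ψ k)) (w (ψ k)))
      atTop (𝓝 (2 * L)) := by
    have hfun : (fun k => a0 (x (ψ k)) (x (ψ k)) + a1 (w (ψ k)) (w (ψ k))) =
        fun k => 2 * lamT (m (ψ k)) := funext fun k => hsum_eq (ψ k)
    rw [hfun]
    exact hLψ.const_mul 2
  have hlow_tend : Tendsto (fun k => (2 * a0 u (x (ψ k)) - a0 u u)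
      + (2 * a1 z (w (ψ k)) - a1 z z)) atTop (𝓝 (a0 u u + a1 z z)) := by
    have heq : a0 u u + a1 z z =
        (2 * a0 u u - a0 u u) + (2 * a1 z z - a1 z z) := by ring
    rw [heq]
    exact ((h6.const_mul 2).sub tendsto_const_nhds).add
      ((h7.const_mul 2).sub tendsto_const_nhds)
  have hkey : a0 u u + a1 z z ≤ 2 * L :=
    le_of_tendsto_of_tendsto' hlow_tend hsum_tend
      (fun k => by linarith [hlsc0 k, hlsc1 k])
  -- u is a normalised eigenvector
  have hru : (a0 u u + a1 (T u) (T u)) / 2 = lam1 := by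
    have hge : lam1 ≤ (a0 u u + a1 (T u) (T u)) / 2 := by
      have := hlam1_le u hu_ne
      rwa [hιu_norm, one_pow, div_one] at this
    have hle : (a0 u u + a1 (T u) (T u)) / 2 ≤ lam1 := by
      rw [← hz_eq]
      linarith [hkey, hL_le]
    linarith
  have hcase := hv_unique u hιu_norm hru
  -- the final limit
  have hinner : Tendsto (fun k => ⟪ι (x (ψ k)), ι v⟫) atTop (𝓝 ⟪ι u, ι v⟫) :=
    hxH.inner tendsto_const_nhds
  have hfin : |⟪ι u, ι v⟫| = 1 := by
    rcases hcase with h | h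
    · rw [h]
      simp [real_inner_self_eq_norm_mul_norm, hv_norm]
    · rw [h]
      simp [inner_neg_left, real_inner_self_eq_norm_mul_norm, hv_norm]
  have habs : Tendsto (fun k => |⟪ι (x (ψ k)), ι v⟫|) atTop (𝓝 1) := by
    have := hinner.abs
    rwa [hfin] at this
  exact ⟨fun k => ψ k + K', habs⟩
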